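/- Let (P_n) be a MOPS with respect to u, and define Q_n := P_n + Σ_{i=1}^N r_{i,n}P_{n-i} with r_{N,N} ≠ 0 (case M = 0). Then ⟨u, Q_n⟩ = 0 for all n ≥ N+1, and ⟨u, Q_N⟩ = r_{N,N} ≠ 0; consequently, if (Q_n) is a MOPS with respect to a regular functional v, then u = Σ_{n=0}^N ⟨u, Q_n⟩ · (Q_n/⟨v,Q_n²⟩) v, which is of the form u = Ψ_N v with Ψ_N of exact degree N. -/

import Mathlib

open Polynomial

/-- Case M = 0: `⟨u, Q_n⟩ = 0` for `n ≥ N+1`, `⟨u, Q_N⟩ = r_{N,N} ≠ 0`, and if `(Q_n)`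
is a MOPS with respect to `v` then `u = Ψ_N v` with
`Ψ_N = Σ_{n=0}^N ⟨u,Q_n⟩ Q_n/⟨v,Q_n²⟩` of exact degree `N`. -/
theorem case_M_zero_functional_relation
    (N : ℕ) (hN : 1 ≤ N)
    (u v : Polynomial ℂ →ₗ[ℂ] ℂ)
    (P Q : ℕ → Polynomial ℂ) (r : ℕ → ℕ → ℂ)
    (hPmonic : ∀ n, (P n).Monic) (hPdeg : ∀ n, (P n).degree = n)
    (hPorth : ∀ m n, m ≠ n → u (P m * P n) = 0) (hPreg : ∀ n, u (P n ^ 2) ≠ 0)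
    (hu1 : u 1 = 1)
    (hQmonic : ∀ n, (Q n).Monic) (hQdeg : ∀ n, (Q n).degree = n)
    (hQorth : ∀ m n, m ≠ n → v (Q m * Q n) = 0) (hQreg : ∀ n, v (Q n ^ 2) ≠ 0)
    (hrz : ∀ i n, n < i → r i n = 0) (hrNN : r N N ≠ 0)
    (hQdef : ∀ n, Q n = P n + ∑ i ∈ Finset.Icc 1 N, r i n • P (n - i)) :
    (∀ n, N + 1 ≤ n → u (Q n) = 0) ∧ u (Q N) = r N N ∧
      (∀ p, u p
        = v ((∑ n ∈ Finset.range (N + 1), (u (Q n) / v (Q n ^ 2)) • Q n) * p)) ∧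
      (∑ n ∈ Finset.range (N + 1), (u (Q n) / v (Q n ^ 2)) • Q n).degree = (N : ℕ) := by
  classical
  -- P 0 = 1
  have hP0 : P 0 = 1 := by
    have h1 := hPmonic 0
    have hd : (P 0).natDegree = 0 :=
      Polynomial.natDegree_eq_zero_iff_degree_le_zero.2 (by simp [hPdeg 0])
    have hC := Polynomial.eq_C_of_natDegree_eq_zero hd
    have hc : (P 0).coeff 0 = 1 := by
      have h2 := h1.leadingCoeff
      rwa [Polynomial.leadingCoeff, hd] at h2
    rw [hC, hc]; simp
  have huP : ∀ n, 1 ≤ n → u (P n) = 0 := by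
    intro n hn
    have h := hPorth 0 n (by omega)
    simpa [hP0] using h
  -- part 1
  have huQ : ∀ n, N + 1 ≤ n → u (Q n) = 0 := by
    intro n hn
    rw [hQdef n, map_add, map_sum, huP n (by omega)]
    rw [Finset.sum_eq_zero, add_zero]
    intro i hi
    simp only [Finset.mem_Icc] at hi
    rw [map_smul, huP (n - i) (by omega), smul_zero]
  -- part 2
  have huQN : u (Q N) = r N N := by
    rw [hQdef N, map_add, map_sum, huP N hN]
    rw [Finset.sum_eq_single N]
    · simp [hP0, hu1]
    · intro i hi hne
      simp only [Finset.mem_Icc] at hi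
      rw [map_smul, huP (N - i) (by omega), smul_zero]
    · intro h
      exact absurd (by simp [Finset.mem_Icc]; omega) h
  set c : ℕ → ℂ := fun n => u (Q n) / v (Q n ^ 2) with hc
  set Φ : Polynomial ℂ := ∑ n ∈ Finset.range (N + 1), c n • Q n with hΦ
  have hcN : c N ≠ 0 := by
    rw [hc]; simp only
    rw [huQN]
    exact div_ne_zero hrNN (hQreg N)
  -- degree of Φ
  have hΦdeg : Φ.degree = (N : ℕ) := by
    rw [hΦ, Finset.sum_range_succ]
    have hA : (∑ n ∈ Finset.range N, c n • Q n).degree < (N : WithBot ℕ) := by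
      apply lt_of_le_of_lt (Polynomial.degree_sum_le _ _)
      rw [Finset.sup_lt_iff (by exact_mod_cast WithBot.bot_lt_coe N)]
      intro n hn
      apply lt_of_le_of_lt (Polynomial.degree_smul_le _ _)
      rw [hQdeg n]
      exact_mod_cast Finset.mem_range.1 hn
    have hB : (c N • Q N).degree = (N : ℕ) := by
      rw [Polynomial.smul_eq_C_mul, Polynomial.degree_C_mul (by exact hcN), hQdeg N]
    rw [Polynomial.degree_add_eq_right_of_degree_lt (by rw [hB]; exact hA), hB]
  -- key: u (Q m) = v (Φ * Q m)
  have hkey : ∀ m, u (Q m) = v (Φ * Q m) := by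
    intro m
    have hexp : v (Φ * Q m) = ∑ n ∈ Finset.range (N + 1), c n * v (Q n * Q m) := by
      rw [hΦ, Finset.sum_mul, map_sum]
      refine Finset.sum_congr rfl fun n _ => ?_
      rw [smul_mul_assoc, map_smul, smul_eq_mul]
    rw [hexp]
    by_cases hm : m ≤ N
    · rw [Finset.sum_eq_single m]
      · rw [← sq, hc]; simp only; rw [div_mul_cancel₀ _ (hQreg m)]
      · intro n _ hne
        rw [hQorth n m hne, mul_zero]
      · intro h
        exact absurd (Finset.mem_range.2 (by omega)) h
    · rw [huQ m (by omega), Finset.sum_eq_zero]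
      intro n hn
      rw [hQorth n m (by simp only [Finset.mem_range] at hn; omega), mul_zero]
  -- span argument
  have hspan : ∀ n : ℕ, ∀ p : Polynomial ℂ, p.degree < (n : WithBot ℕ) →
      u p = v (Φ * p) := by
    intro n
    induction n with
    | zero =>
      intro p hp
      have : p = 0 := by
        rw [← Polynomial.degree_eq_bot]
        exact Nat.WithBot.lt_zero_iff.1 (by exact_mod_cast hp)
      simp [this]
    | succ n ih =>
      intro p hp
      by_cases hp0 : p = 0
      · simp [hp0]
      · have hdlt : p.natDegree < n + 1 :=
          (Polynomial.natDegree_lt_iff_degree_lt hp0).2 (by exact_mod_cast hp)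
        set d := p.natDegree with hd
        set q := p - Polynomial.C p.leadingCoeff * Q d with hq
        have hdegq : q.degree < (n : WithBot ℕ) := by
          have h1 : q.degree < p.degree := by
            apply Polynomial.degree_sub_lt
            · rw [Polynomial.degree_C_mul (Polynomial.leadingCoeff_ne_zero.2 hp0),
                hQdeg d, Polynomial.degree_eq_natDegree hp0]
            · exact hp0
            · rw [Polynomial.leadingCoeff_mul, Polynomial.leadingCoeff_C,
                (hQmonic d).leadingCoeff, mul_one]
          apply lt_of_lt_of_le h1
          rw [Polynomial.degree_eq_natDegree hp0]
          exact_mod_cast Nat.lt_succ_iff.1 hdlt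
        obtain ⟨a, ha⟩ : ∃ a : ℂ, a = p.leadingCoeff := ⟨_, rfl⟩
        have hpeq : p = q + Polynomial.C a * Q d := by
          rw [hq, ha]; ring
        have hsc : ∀ (w : Polynomial ℂ →ₗ[ℂ] ℂ) (a : ℂ) (s : Polynomial ℂ),
            w (Polynomial.C a * s) = a * w s := fun w a s => by
          rw [← Polynomial.smul_eq_C_mul, map_smul, smul_eq_mul]
        calc u p = u q + a * u (Q d) := by
              rw [hpeq, map_add, hsc]
          _ = v (Φ * q) + a * v (Φ * Q d) := by
              rw [ih q hdegq, hkey d]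
          _ = v (Φ * p) := by
              rw [hpeq, mul_add, map_add,
                show Φ * (Polynomial.C a * Q d)
                  = Polynomial.C a * (Φ * Q d) by ring, hsc]
  refine ⟨huQ, huQN, fun p => ?_, hΦdeg⟩
  exact hspan (p.natDegree + 1) p
    (lt_of_le_of_lt (Polynomial.degree_le_natDegree)
      (by exact_mod_cast Nat.lt_succ_self _))
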